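/- arXiv:1305.2385 — 3 statements merged into one kernel-verified Lean document; each statement's English description precedes it below -/
import Mathlib

section
/- Second-order constraints at a zero of a witness: if Ω is an entanglement witness and (φ₀,χ₀) is a zero of Ω, then H_Ω(φ₀,χ₀;ξ,ζ) ≥ 0 for all vectors ξ ∈ ℂ^Na and ζ ∈ ℂ^Nb. -/
open Matrix
open scoped ComplexOrder

noncomputable section

namespace EW

/-- Complex square matrices indexed by `Fin Na × Fin Nb`. -/
abbrev Mat (Na Nb : ℕ) := Matrix (Fin Na × Fin Nb) (Fin Na × Fin Nb) ℂ

/-- Kronecker product of vectors: `(φ⊗χ)_(i,j) = φ_i · χ_j`. -/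
def kron {Na Nb : ℕ} (φ : Fin Na → ℂ) (χ : Fin Nb → ℂ) : Fin Na × Fin Nb → ℂ :=
  fun p => φ p.1 * χ p.2

/-- Sesquilinear pairing `xᴴ A y`. -/
def pair {n : Type*} [Fintype n] (A : Matrix n n ℂ) (x y : n → ℂ) : ℂ :=
  star x ⬝ᵥ A.mulVec y

/-- The biquadratic form `f_A(φ,χ) = (φ⊗χ)ᴴ A (φ⊗χ)`. -/
def biquad {Na Nb : ℕ} (A : Mat Na Nb) (φ : Fin Na → ℂ) (χ : Fin Nb → ℂ) : ℂ :=
  pair A (kron φ χ) (kron φ χ)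

/-- An entanglement witness: a Hermitian matrix whose biquadratic form is nonnegative. -/
def IsWitness {Na Nb : ℕ} (A : Mat Na Nb) : Prop :=
  A.IsHermitian ∧ ∀ φ χ, 0 ≤ biquad A φ χ

/-- `S₁°`, the set of trace-one entanglement witnesses. -/
def witnessSet (Na Nb : ℕ) : Set (Mat Na Nb) :=
  { Ω | IsWitness Ω ∧ Ω.trace = 1 }

/-- A zero of a witness: a pair of nonzero vectors where the biquadratic form vanishes. -/
def IsZeroOf {Na Nb : ℕ} (Ω : Mat Na Nb) (φ₀ : Fin Na → ℂ) (χ₀ : Fin Nb → ℂ) : Prop :=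
  φ₀ ≠ 0 ∧ χ₀ ≠ 0 ∧ biquad Ω φ₀ χ₀ = 0

/-- The Hessian form
`H_A(φ₀,χ₀;ξ,ζ) = Re[(ξ⊗χ₀)ᴴA(ξ⊗χ₀) + (φ₀⊗ζ)ᴴA(φ₀⊗ζ) + 2(φ₀⊗ζ)ᴴA(ξ⊗χ₀) + 2(φ₀⊗χ₀)ᴴA(ξ⊗ζ)]`. -/
def hessForm {Na Nb : ℕ} (A : Mat Na Nb) (φ₀ : Fin Na → ℂ) (χ₀ : Fin Nb → ℂ)
    (ξ : Fin Na → ℂ) (ζ : Fin Nb → ℂ) : ℝ :=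
  (pair A (kron ξ χ₀) (kron ξ χ₀) + pair A (kron φ₀ ζ) (kron φ₀ ζ)
    + 2 * pair A (kron φ₀ ζ) (kron ξ χ₀) + 2 * pair A (kron φ₀ χ₀) (kron ξ ζ)).re

/-- A Hessian zero of `Ω` at the zero `(φ₀,χ₀)`. -/
def IsHessianZeroAt {Na Nb : ℕ} (Ω : Mat Na Nb) (φ₀ : Fin Na → ℂ) (χ₀ : Fin Nb → ℂ)
    (ξ : Fin Na → ℂ) (ζ : Fin Nb → ℂ) : Prop :=
  (ξ, ζ) ≠ (0, 0) ∧ star φ₀ ⬝ᵥ ξ = 0 ∧ star χ₀ ⬝ᵥ ζ = 0 ∧ hessForm Ω φ₀ χ₀ ξ ζ = 0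

/-- A quadratic witness: a witness all of whose zeros have no Hessian zeros. -/
def IsQuadraticWitness {Na Nb : ℕ} (Ω : Mat Na Nb) : Prop :=
  IsWitness Ω ∧ ∀ φ₀ χ₀, IsZeroOf Ω φ₀ χ₀ → ∀ ξ ζ, ¬ IsHessianZeroAt Ω φ₀ χ₀ ξ ζ

/-- Partial transpose with respect to the second factor. -/
def ptrans {Na Nb : ℕ} (A : Mat Na Nb) : Mat Na Nb :=
  fun p q => A (p.1, q.2) (q.1, p.2)

/-- Euclidean norm of a complex vector. -/
def enorm {n : Type*} [Fintype n] (x : n → ℂ) : ℝ :=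
  Real.sqrt (star x ⬝ᵥ x).re

/-- Frobenius norm of a matrix. -/
def frobNorm {Na Nb : ℕ} (A : Mat Na Nb) : ℝ :=
  Real.sqrt (∑ i, ∑ j, ‖A i j‖ ^ 2)

/-- `S₁`, the set of separable states: the convex hull of normalized pure product states. -/
def sepSet (Na Nb : ℕ) : Set (Mat Na Nb) :=
  convexHull ℝ { M | ∃ (φ : Fin Na → ℂ) (χ : Fin Nb → ℂ), enorm (kron φ χ) = 1 ∧
    M = Matrix.vecMulVec (kron φ χ) (star (kron φ χ)) }

/-- `Γ` satisfies the constraint system of the witness `Ω`. -/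
def SatisfiesConstraints {Na Nb : ℕ} (Ω Γ : Mat Na Nb) : Prop :=
  (∀ φ₀ χ₀, IsZeroOf Ω φ₀ χ₀ →
    (∀ φ, pair Γ (kron φ χ₀) (kron φ₀ χ₀) = 0) ∧
    (∀ χ, pair Γ (kron φ₀ χ) (kron φ₀ χ₀) = 0)) ∧
  (∀ φ₀ χ₀, IsZeroOf Ω φ₀ χ₀ → ∀ ξ ζ, IsHessianZeroAt Ω φ₀ χ₀ ξ ζ →
    ∀ ξ' ζ', star φ₀ ⬝ᵥ ξ' = 0 → star χ₀ ⬝ᵥ ζ' = 0 →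
      hessForm Γ φ₀ χ₀ (ξ + ξ') (ζ + ζ') =
        hessForm Γ φ₀ χ₀ ξ ζ + hessForm Γ φ₀ χ₀ ξ' ζ') ∧
  (∀ φ₀ χ₀, IsZeroOf Ω φ₀ χ₀ → ∀ ξ ζ, IsHessianZeroAt Ω φ₀ χ₀ ξ ζ →
    (pair Γ (kron φ₀ ζ) (kron ξ ζ) + pair Γ (kron ξ χ₀) (kron ξ ζ)).re = 0)

end EW

namespace EW

lemma pair_star {n : Type*} [Fintype n] {A : Matrix n n ℂ} (hA : A.IsHermitian)
    (x y : n → ℂ) : pair A y x = star (pair A x y) := by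
  calc pair A y x = star (star (pair A y x)) := by rw [star_star]
  _ = star (pair A x y) := by
      congr 1
      rw [pair, pair, star_dotProduct, star_star, Matrix.star_mulVec, hA.eq,
        Matrix.dotProduct_mulVec]

lemma pair_add_left {n : Type*} [Fintype n] (A : Matrix n n ℂ) (x x' y : n → ℂ) :
    pair A (x + x') y = pair A x y + pair A x' y := by
  simp [pair, add_dotProduct]

lemma pair_add_right {n : Type*} [Fintype n] (A : Matrix n n ℂ) (x y y' : n → ℂ) :
    pair A x (y + y') = pair A x y + pair A x y' := by
  simp [pair, Matrix.mulVec_add, dotProduct_add]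

lemma pair_smul_left {n : Type*} [Fintype n] (A : Matrix n n ℂ) (t : ℝ) (k : ℕ)
    (x y : n → ℂ) : pair A ((t:ℂ)^k • x) y = (t:ℂ)^k * pair A x y := by
  simp [pair, smul_dotProduct, Complex.star_def, Complex.conj_ofReal, map_pow]

lemma pair_smul_right {n : Type*} [Fintype n] (A : Matrix n n ℂ) (t : ℂ) (x y : n → ℂ) :
    pair A x (t • y) = t * pair A x y := by
  simp [pair, Matrix.mulVec_smul, dotProduct_smul]

lemma kron_expand {Na Nb : ℕ} (φ₀ ξ : Fin Na → ℂ) (χ₀ ζ : Fin Nb → ℂ) (t : ℝ) :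
    kron (φ₀ + (t:ℂ) • ξ) (χ₀ + (t:ℂ) • ζ) =
      kron φ₀ χ₀ + (t:ℂ)^1 • (kron ξ χ₀ + kron φ₀ ζ) + (t:ℂ)^2 • kron ξ ζ := by
  funext p
  simp only [kron, Pi.add_apply, Pi.smul_apply, smul_eq_mul]
  ring

lemma expand {n : Type*} [Fintype n] (A : Matrix n n ℂ) (a b c : n → ℂ) (t : ℝ) :
    pair A (a + (t:ℂ)^1 • b + (t:ℂ)^2 • c) (a + (t:ℂ)^1 • b + (t:ℂ)^2 • c) =
      pair A a a + (t:ℂ) * (pair A a b + pair A b a)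
      + (t:ℂ)^2 * (pair A a c + pair A c a + pair A b b)
      + (t:ℂ)^3 * (pair A b c + pair A c b) + (t:ℂ)^4 * pair A c c := by
  simp only [pair_add_left, pair_add_right, pair_smul_left, pair_smul_right]
  ring

end EW

open EW
theorem second_order_constraints (Na Nb : ℕ) (Ω : Mat Na Nb) (hΩ : IsWitness Ω)
    (φ₀ : Fin Na → ℂ) (χ₀ : Fin Nb → ℂ) (hz : IsZeroOf Ω φ₀ χ₀) :
    ∀ (ξ : Fin Na → ℂ) (ζ : Fin Nb → ℂ), 0 ≤ hessForm Ω φ₀ χ₀ ξ ζ := by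
  intro ξ ζ
  set H := hessForm Ω φ₀ χ₀ ξ ζ with hH
  set C := (pair Ω (kron ξ ζ) (kron ξ ζ)).re with hC
  have hherm := hΩ.1
  -- C ≥ 0
  have hCnn : 0 ≤ C := by
    have := hΩ.2 ξ ζ
    rw [Complex.le_def] at this
    exact this.1
  -- key inequality
  have key : ∀ t : ℝ, 0 ≤ t^2 * H + t^4 * C := by
    intro t
    have h1 := hΩ.2 (φ₀ + (t:ℂ) • ξ) (χ₀ + (t:ℂ) • ζ)
    have h2 := hΩ.2 (φ₀ + ((-t:ℝ):ℂ) • ξ) (χ₀ + ((-t:ℝ):ℂ) • ζ)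
    rw [Complex.le_def] at h1 h2
    have e1 : biquad Ω (φ₀ + (t:ℂ) • ξ) (χ₀ + (t:ℂ) • ζ) =
        pair Ω (kron φ₀ χ₀) (kron φ₀ χ₀)
        + (t:ℂ) * (pair Ω (kron φ₀ χ₀) (kron ξ χ₀ + kron φ₀ ζ)
            + pair Ω (kron ξ χ₀ + kron φ₀ ζ) (kron φ₀ χ₀))
        + (t:ℂ)^2 * (pair Ω (kron φ₀ χ₀) (kron ξ ζ) + pair Ω (kron ξ ζ) (kron φ₀ χ₀)
            + pair Ω (kron ξ χ₀ + kron φ₀ ζ) (kron ξ χ₀ + kron φ₀ ζ))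
        + (t:ℂ)^3 * (pair Ω (kron ξ χ₀ + kron φ₀ ζ) (kron ξ ζ)
            + pair Ω (kron ξ ζ) (kron ξ χ₀ + kron φ₀ ζ))
        + (t:ℂ)^4 * pair Ω (kron ξ ζ) (kron ξ ζ) := by
      rw [biquad, kron_expand, expand]
    have e2 : biquad Ω (φ₀ + ((-t:ℝ):ℂ) • ξ) (χ₀ + ((-t:ℝ):ℂ) • ζ) =
        pair Ω (kron φ₀ χ₀) (kron φ₀ χ₀)
        + ((-t:ℝ):ℂ) * (pair Ω (kron φ₀ χ₀) (kron ξ χ₀ + kron φ₀ ζ)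
            + pair Ω (kron ξ χ₀ + kron φ₀ ζ) (kron φ₀ χ₀))
        + ((-t:ℝ):ℂ)^2 * (pair Ω (kron φ₀ χ₀) (kron ξ ζ) + pair Ω (kron ξ ζ) (kron φ₀ χ₀)
            + pair Ω (kron ξ χ₀ + kron φ₀ ζ) (kron ξ χ₀ + kron φ₀ ζ))
        + ((-t:ℝ):ℂ)^3 * (pair Ω (kron ξ χ₀ + kron φ₀ ζ) (kron ξ ζ)
            + pair Ω (kron ξ ζ) (kron ξ χ₀ + kron φ₀ ζ))
        + ((-t:ℝ):ℂ)^4 * pair Ω (kron ξ ζ) (kron ξ ζ) := by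
      rw [biquad, kron_expand, expand]
    have hPaa : pair Ω (kron φ₀ χ₀) (kron φ₀ χ₀) = 0 := hz.2.2
    set S : ℂ := pair Ω (kron φ₀ χ₀) (kron ξ ζ) + pair Ω (kron ξ ζ) (kron φ₀ χ₀)
        + pair Ω (kron ξ χ₀ + kron φ₀ ζ) (kron ξ χ₀ + kron φ₀ ζ) with hSdef
    have hsum : biquad Ω (φ₀ + (t:ℂ) • ξ) (χ₀ + (t:ℂ) • ζ)
        + biquad Ω (φ₀ + ((-t:ℝ):ℂ) • ξ) (χ₀ + ((-t:ℝ):ℂ) • ζ)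
        = (t:ℂ)^2 * (2 * S) + (t:ℂ)^4 * (2 * pair Ω (kron ξ ζ) (kron ξ ζ)) := by
      rw [e1, e2, hPaa]
      push_cast
      ring
    -- S.re = H
    have hSre : S.re = H := by
      have hca : pair Ω (kron ξ ζ) (kron φ₀ χ₀)
          = star (pair Ω (kron φ₀ χ₀) (kron ξ ζ)) := pair_star hherm _ _
      have hbc : pair Ω (kron ξ χ₀) (kron φ₀ ζ)
          = star (pair Ω (kron φ₀ ζ) (kron ξ χ₀)) := pair_star hherm _ _
      rw [hSdef, hH, hessForm]
      simp only [pair_add_left, pair_add_right, hca, hbc, Complex.add_re,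
        Complex.mul_re, Complex.star_def, Complex.conj_re]
      norm_num
      ring
    have hre : 0 ≤ t^2 * (2 * S.re) + t^4 * (2 * C) := by
      have := add_nonneg h1.1 h2.1
      rw [← Complex.add_re, hsum] at this
      have h4 : ((t:ℂ)^2 * (2 * S) + (t:ℂ)^4 * (2 * pair Ω (kron ξ ζ) (kron ξ ζ))).re
          = t^2 * (2 * S.re) + t^4 * (2 * C) := by
        simp only [← Complex.ofReal_pow, Complex.re_ofReal_mul, Complex.add_re,
          Complex.mul_re, Complex.re_ofNat, Complex.im_ofNat, Complex.add_im, Complex.ofReal_re, Complex.ofReal_im, hC]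
        ring
      rw [h4] at this
      exact this
    rw [hSre] at hre
    nlinarith [hre]
  -- conclude H ≥ 0
  by_contra hHneg
  push_neg at hHneg
  set s : ℝ := -H / (2 * (C + 1)) with hs
  have hspos : 0 < s := by
    apply div_pos (by linarith) (by linarith)
  have hseq : s * (2 * (C + 1)) = -H := by
    rw [hs]
    exact div_mul_cancel₀ (-H) (ne_of_gt (by linarith))
  have hkey := key (Real.sqrt s)
  rw [show (Real.sqrt s)^2 = s from Real.sq_sqrt hspos.le,
    show (Real.sqrt s)^4 = s^2 by rw [show (4:ℕ) = 2*2 from rfl, pow_mul, Real.sq_sqrt hspos.le]] at hkey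
  nlinarith [mul_pos hspos hspos, mul_nonneg hspos.le hCnn]
end
end

section
/- For every unit vector ψ ∈ ℂ^(Fin Na × Fin Nb), the pure state ψψᴴ is an extreme point of S₁° (in particular it is an entanglement witness of trace 1), and its partial transpose (ψψᴴ)ᴾ is also an extreme point of S₁°. -/
open Matrix
open scoped ComplexOrder

noncomputable section

namespace EWAux
open EW

section sesq
variable {V : Type*} [AddCommGroup V] [Module ℂ V]
variable (B : V → V → ℂ)

lemma sesq_diag_zero
    (haddl : ∀ x x' z, B (x + x') z = B x z + B x' z)
    (hsmull : ∀ (c : ℂ) x z, B (c • x) z = star c * B x z)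
    (haddr : ∀ x z z', B x (z + z') = B x z + B x z')
    (hsmulr : ∀ (c : ℂ) x z, B x (c • z) = c * B x z)
    (hdiag : ∀ x, B x x = 0) : ∀ x z, B x z = 0 := by
  intro x z
  have h1 := hdiag (x + z)
  have h2 := hdiag (x + Complex.I • z)
  rw [haddl, haddr, haddr, hdiag, hdiag] at h1
  rw [haddl, haddr, haddr, hsmulr, hsmull, hsmull, hsmulr, hdiag] at h2
  simp only [Complex.star_def, Complex.conj_I] at h2
  rw [hdiag] at h2
  linear_combination (h1 - Complex.I * h2) / 2 + ((B x z - B z x)/2) * Complex.I_sq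

lemma sesq_pos_kernel
    (haddl : ∀ x x' z, B (x + x') z = B x z + B x' z)
    (hsmull : ∀ (c : ℂ) x z, B (c • x) z = star c * B x z)
    (haddr : ∀ x z z', B x (z + z') = B x z + B x z')
    (hsmulr : ∀ (c : ℂ) x z, B x (c • z) = c * B x z)
    (hsym : ∀ x z, B z x = star (B x z))
    (hpos : ∀ x, 0 ≤ B x x) {x : V} (hx : B x x = 0) : ∀ z, B x z = 0 := by
  intro z
  set w := B x z with hw
  by_contra hwne
  have hR : (0:ℝ) < Complex.normSq w := Complex.normSq_pos.mpr hwne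
  have hzz := hpos z
  rw [Complex.le_def] at hzz
  have hs : 0 ≤ (B z z).re := by simpa using hzz.1
  have hsim : (B z z).im = 0 := by simpa using hzz.2.symm
  set s := (B z z).re with hsdef
  set ε : ℝ := (s + 1)⁻¹ with hε
  have hεpos : 0 < ε := by positivity
  have hkey := hpos (x + ((-(ε:ℂ)) * star w) • z)
  set t : ℂ := (-(ε:ℂ)) * star w with ht
  rw [haddl, haddr, haddr, hsmull, hsmulr, hsmull, hsmulr, hx] at hkey
  have hzx : B z x = star w := hsym x z
  rw [hzx] at hkey
  rw [Complex.le_def] at hkey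
  have h2 := hkey.1
  have hstar_t : star t = (-(ε:ℂ)) * w := by
    rw [ht]; simp [StarMul.star_mul, star_star]; ring
  rw [hstar_t] at h2
  have hexp : (0:ℝ) ≤ ((-(ε:ℂ)) * star w * w + ((-(ε:ℂ)) * w * star w + (-(ε:ℂ)) * w * ((-(ε:ℂ)) * star w * (B z z)))).re := by
    rw [ht] at h2; simpa using h2
  have hww : w * star w = (Complex.normSq w : ℂ) := by
    rw [Complex.star_def, Complex.mul_conj]
  set R := Complex.normSq w with hRdef
  have e1 : ((-(ε:ℂ)) * star w * w + ((-(ε:ℂ)) * w * star w + (-(ε:ℂ)) * w * ((-(ε:ℂ)) * star w * (B z z)))) = ((-(ε*R) : ℝ) : ℂ) + (((-(ε*R):ℝ) : ℂ) + ((ε^2 * R : ℝ) : ℂ) * (B z z)) := by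
    push_cast
    linear_combination ((ε:ℂ)^2 * B z z - 2*(ε:ℂ)) * hww
  rw [e1] at hexp
  have hexp2 : (0:ℝ) ≤ -(ε * R) + (-(ε * R) + ε^2 * R * s) := by
    simpa [Complex.add_re, Complex.mul_re, Complex.ofReal_re, Complex.ofReal_im, hsim, ← hsdef, ← Complex.ofReal_pow] using hexp
  have h3 : ε * (s + 1) = 1 := by
    rw [hε]; field_simp
  nlinarith [hexp2, mul_pos hεpos hR, mul_pos (mul_pos hεpos hεpos) hR, h3, hs]
end sesq

variable {Na Nb : ℕ}

lemma kron_add_left (φ φ' : Fin Na → ℂ) (χ : Fin Nb → ℂ) :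
    kron (φ + φ') χ = kron φ χ + kron φ' χ := by
  funext p; simp [kron, add_mul]

lemma kron_smul_left (c : ℂ) (φ : Fin Na → ℂ) (χ : Fin Nb → ℂ) :
    kron (c • φ) χ = c • kron φ χ := by
  funext p; simp [kron]; ring

lemma kron_add_right (φ : Fin Na → ℂ) (χ χ' : Fin Nb → ℂ) :
    kron φ (χ + χ') = kron φ χ + kron φ χ' := by
  funext p; simp [kron, mul_add]

lemma kron_smul_right (c : ℂ) (φ : Fin Na → ℂ) (χ : Fin Nb → ℂ) :
    kron φ (c • χ) = c • kron φ χ := by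
  funext p; simp [kron]; ring

section pairlemmas
variable {n : Type*} [Fintype n]

lemma pair_add_left (A : Matrix n n ℂ) (x x' y : n → ℂ) :
    pair A (x + x') y = pair A x y + pair A x' y := by
  simp [pair, star_add, add_dotProduct]

lemma pair_smul_left (A : Matrix n n ℂ) (c : ℂ) (x y : n → ℂ) :
    pair A (c • x) y = star c * pair A x y := by
  simp [pair, star_smul, smul_dotProduct, smul_eq_mul]

lemma pair_add_right (A : Matrix n n ℂ) (x y y' : n → ℂ) :
    pair A x (y + y') = pair A x y + pair A x y' := by
  simp [pair, mulVec_add, dotProduct_add]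

lemma pair_smul_right (A : Matrix n n ℂ) (c : ℂ) (x y : n → ℂ) :
    pair A x (c • y) = c * pair A x y := by
  simp [pair, mulVec_smul, dotProduct_smul, smul_eq_mul]

lemma pair_conj {A : Matrix n n ℂ} (hA : A.IsHermitian) (x y : n → ℂ) :
    pair A y x = star (pair A x y) := by
  have hAe : ∀ i j, star (A i j) = A j i := by
    intro i j; have := congr_fun (congr_fun hA j) i
    simpa [conjTranspose_apply] using this
  simp only [pair, dotProduct, mulVec, Pi.star_apply, star_sum, star_mul', star_star, hAe]
  simp only [Finset.mul_sum]
  rw [Finset.sum_comm]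
  exact Finset.sum_congr rfl fun i _ => Finset.sum_congr rfl fun j _ => by ring

lemma pair_matadd (A B : Matrix n n ℂ) (x y : n → ℂ) :
    pair (A + B) x y = pair A x y + pair B x y := by
  simp [pair, add_mulVec, dotProduct_add]

lemma pair_matsmul (c : ℂ) (A : Matrix n n ℂ) (x y : n → ℂ) :
    pair (c • A) x y = c * pair A x y := by
  simp [pair, smul_mulVec, dotProduct_smul, smul_eq_mul]

lemma pair_vecMulVec (ψ : n → ℂ) (x y : n → ℂ) :
    pair (vecMulVec ψ (star ψ)) x y = star (star ψ ⬝ᵥ x) * (star ψ ⬝ᵥ y) := by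
  simp only [pair, dotProduct, mulVec, vecMulVec_apply, Pi.star_apply, star_sum, star_mul',
    star_star]
  rw [Finset.sum_mul]
  refine Finset.sum_congr rfl fun i _ => ?_
  rw [Finset.mul_sum, Finset.mul_sum]
  exact Finset.sum_congr rfl fun j _ => by ring

lemma pair_single (A : Matrix n n ℂ) [DecidableEq n] (p q : n) :
    pair A (Pi.single p 1) (Pi.single q 1) = A p q := by
  simp [pair, mulVec_single, dotProduct, Pi.single_apply, apply_ite, Finset.sum_ite_eq']
end pairlemmas

/-- The key per-`χ` structure lemma. -/
lemma perChi (y : Mat Na Nb) (hH : y.IsHermitian)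
    (hpos : ∀ φ χ, 0 ≤ biquad y φ χ)
    (ψ : Fin Na × Fin Nb → ℂ) (C : ℂ)
    (hdom : ∀ φ χ, biquad y φ χ ≤ C * (star (star ψ ⬝ᵥ kron φ χ) * (star ψ ⬝ᵥ kron φ χ)))
    (χ : Fin Nb → ℂ) :
    ∃ k : ℂ, ∀ φ φ', pair y (kron φ χ) (kron φ' χ)
      = k * star (star ψ ⬝ᵥ kron φ χ) * (star ψ ⬝ᵥ kron φ' χ) := by
  set B : (Fin Na → ℂ) → (Fin Na → ℂ) → ℂ := fun x z => pair y (kron x χ) (kron z χ) with hB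
  have haddl : ∀ x x' z, B (x + x') z = B x z + B x' z := fun x x' z => by
    simp [hB, kron_add_left, pair_add_left]
  have hsmull : ∀ (c : ℂ) x z, B (c • x) z = star c * B x z := fun c x z => by
    simp [hB, kron_smul_left, pair_smul_left]
  have haddr : ∀ x z z', B x (z + z') = B x z + B x z' := fun x z z' => by
    simp [hB, kron_add_left, pair_add_right]
  have hsmulr : ∀ (c : ℂ) x z, B x (c • z) = c * B x z := fun c x z => by
    simp [hB, kron_smul_left, pair_smul_right]
  have hsym : ∀ x z, B z x = star (B x z) := fun x z => pair_conj hH _ _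
  have hposB : ∀ x, 0 ≤ B x x := fun x => hpos x χ
  set c : (Fin Na → ℂ) → ℂ := fun φ => star ψ ⬝ᵥ kron φ χ with hc
  have hcadd : ∀ x x', c (x + x') = c x + c x' := fun x x' => by
    simp [hc, kron_add_left, dotProduct_add]
  have hcsmul : ∀ (t : ℂ) x, c (t • x) = t * c x := fun t x => by
    simp [hc, kron_smul_left, dotProduct_smul]
  have hker : ∀ x, c x = 0 → (∀ z, B x z = 0) ∧ (∀ z, B z x = 0) := by
    intro x hx
    have hxx : B x x = 0 := by
      have h1 := hdom x χ
      have hx' : star ψ ⬝ᵥ kron x χ = 0 := hx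
      rw [hx'] at h1
      simp only [star_zero, mul_zero, zero_mul] at h1
      exact le_antisymm h1 (hposB x)
    have h1 := sesq_pos_kernel B haddl hsmull haddr hsmulr hsym hposB hxx
    exact ⟨h1, fun z => by rw [hsym x z, h1 z, star_zero]⟩
  set u : Fin Na → ℂ := fun i => ∑ j, ψ (i, j) * star (χ j) with hu
  have hcu : ∀ φ, c φ = star u ⬝ᵥ φ := by
    intro φ
    simp only [hc, hu, dotProduct, kron, Pi.star_apply, Fintype.sum_prod_type, star_sum,
      star_mul', star_star]
    refine Finset.sum_congr rfl fun i _ => ?_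
    rw [Finset.sum_mul]
    exact Finset.sum_congr rfl fun j _ => by ring
  by_cases hu0 : u = 0
  · refine ⟨0, fun φ φ' => ?_⟩
    have hdiag : ∀ x, B x x = 0 := by
      intro x
      have : c x = 0 := by rw [hcu, hu0]; simp
      exact ((hker x this).1 x)
    rw [show pair y (kron φ χ) (kron φ' χ) = B φ φ' from rfl,
      sesq_diag_zero B haddl hsmull haddr hsmulr hdiag φ φ']
    ring
  · set s : ℂ := star u ⬝ᵥ u with hsdef
    have hs0 : s ≠ 0 := by
      intro h
      apply hu0
      funext i
      have h2 : ∀ j, star u j * u j = 0 := by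
        have hterm : ∀ j ∈ Finset.univ, (0:ℂ) ≤ star u j * u j := fun j _ => by
          simpa [Pi.star_apply] using star_mul_self_nonneg (u j)
        intro j
        have := (Finset.sum_eq_zero_iff_of_nonneg hterm).mp (by simpa [hsdef, dotProduct] using h) j
          (Finset.mem_univ j)
        exact this
      have := h2 i
      simp only [Pi.star_apply] at this
      rcases mul_eq_zero.mp this with h | h
      · simpa using congrArg star h
      · exact h
    have hss : star s = s := by
      simp only [hsdef, dotProduct, star_sum, star_mul', star_star, Pi.star_apply]
      exact Finset.sum_congr rfl fun i _ => mul_comm _ _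
    refine ⟨B u u / (s * s), fun φ φ' => ?_⟩
    set t : ℂ := c φ / s with htdef
    set t' : ℂ := c φ' / s with ht'def
    set x : Fin Na → ℂ := φ - t • u with hxdef
    set x' : Fin Na → ℂ := φ' - t' • u with hx'def
    have hcux : c u = s := by rw [hcu]
    have hcx : c x = 0 := by
      have : c x = c φ - t * c u := by
        have : φ = x + t • u := by rw [hxdef]; abel
        rw [this, hcadd, hcsmul]; ring
      rw [this, hcux, htdef]
      field_simp
      ring
    have hcx' : c x' = 0 := by
      have : c x' = c φ' - t' * c u := by
        have : φ' = x' + t' • u := by rw [hx'def]; abel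
        rw [this, hcadd, hcsmul]; ring
      rw [this, hcux, ht'def]
      field_simp
      ring
    have hφ : φ = t • u + x := by rw [hxdef]; abel
    have hφ' : φ' = t' • u + x' := by rw [hx'def]; abel
    have hBx := hker x hcx
    have hBx' := hker x' hcx'
    have expand : B φ φ' = star t * (t' * B u u) := by
      rw [hφ, hφ', haddl, haddr, haddr, hsmull, hsmull, hsmulr,
        hBx.1, hBx.1, hBx'.2]
      ring
    have hcφ : c φ = t * s := by rw [htdef]; field_simp
    have hcφ' : c φ' = t' * s := by rw [ht'def]; field_simp
    have h2 : star ψ ⬝ᵥ kron φ χ = t * s := hcφ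
    have h3 : star ψ ⬝ᵥ kron φ' χ = t' * s := hcφ'
    rw [show pair y (kron φ χ) (kron φ' χ) = B φ φ' from rfl, expand, h2, h3, star_mul', hss]
    field_simp

lemma kron_single (p : Fin Na × Fin Nb) :
    kron (Pi.single p.1 (1:ℂ)) (Pi.single p.2 (1:ℂ)) = Pi.single p 1 := by
  funext q
  rcases q with ⟨i, j⟩
  rcases p with ⟨a, b⟩
  by_cases h1 : i = a <;> by_cases h2 : j = b <;>
    simp [kron, Pi.single_apply, Prod.ext_iff, h1, h2]

lemma biquad_zero_eq_zero (A : Mat Na Nb) (h : ∀ φ χ, biquad A φ χ = 0) : A = 0 := by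
  have stage1 : ∀ (χ : Fin Nb → ℂ) (φ φ' : Fin Na → ℂ),
      pair A (kron φ χ) (kron φ' χ) = 0 := by
    intro χ
    exact sesq_diag_zero (fun x z => pair A (kron x χ) (kron z χ))
      (fun x x' z => by simp [kron_add_left, pair_add_left])
      (fun c x z => by simp [kron_smul_left, pair_smul_left])
      (fun x z z' => by simp [kron_add_left, pair_add_right])
      (fun c x z => by simp [kron_smul_left, pair_smul_right])
      (fun x => h x χ)
  have stage2 : ∀ (φ φ' : Fin Na → ℂ) (χ χ' : Fin Nb → ℂ),
      pair A (kron φ χ) (kron φ' χ') = 0 := by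
    intro φ φ'
    exact sesq_diag_zero (fun x z => pair A (kron φ x) (kron φ' z))
      (fun x x' z => by simp [kron_add_right, pair_add_left])
      (fun c x z => by simp [kron_smul_right, pair_smul_left])
      (fun x z z' => by simp [kron_add_right, pair_add_right])
      (fun c x z => by simp [kron_smul_right, pair_smul_right])
      (fun x => stage1 x φ φ')
  ext p q
  have h2 := stage2 (Pi.single p.1 1) (Pi.single q.1 1) (Pi.single p.2 1) (Pi.single q.2 1)
  rw [kron_single, kron_single, pair_single] at h2
  simpa using h2

def swapM (y : Mat Na Nb) : Mat Nb Na := fun p q => y (p.2, p.1) (q.2, q.1)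
def swapV (ψ : Fin Na × Fin Nb → ℂ) : Fin Nb × Fin Na → ℂ := fun p => ψ (p.2, p.1)

lemma swap_dot (ψ : Fin Na × Fin Nb → ℂ) (φ : Fin Na → ℂ) (χ : Fin Nb → ℂ) :
    star (swapV ψ) ⬝ᵥ kron χ φ = star ψ ⬝ᵥ kron φ χ := by
  simp only [dotProduct, Pi.star_apply, swapV, kron]
  refine Fintype.sum_equiv (Equiv.prodComm (Fin Nb) (Fin Na)) _ _ fun p => ?_
  simp only [Equiv.prodComm_apply, Prod.fst_swap, Prod.snd_swap]
  rw [show p.swap = (p.2, p.1) from rfl]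
  ring

lemma swap_pair (y : Mat Na Nb) (φ φ' : Fin Na → ℂ) (χ χ' : Fin Nb → ℂ) :
    pair (swapM y) (kron χ φ) (kron χ' φ') = pair y (kron φ χ) (kron φ' χ') := by
  simp only [pair, dotProduct, mulVec, swapM, kron, Pi.star_apply, star_mul']
  refine Fintype.sum_equiv (Equiv.prodComm (Fin Nb) (Fin Na)) _ _ fun p => ?_
  simp only [Equiv.prodComm_apply, Prod.fst_swap, Prod.snd_swap]
  rw [show p.swap = (p.2, p.1) from rfl]
  have hinner : (∑ x : Fin Nb × Fin Na, y (p.2, p.1) (x.2, x.1) * (χ' x.1 * φ' x.2)) =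
      ∑ x : Fin Na × Fin Nb, y (p.2, p.1) x * (φ' x.1 * χ' x.2) := by
    refine Fintype.sum_equiv (Equiv.prodComm (Fin Nb) (Fin Na)) _ _ fun q => ?_
    simp only [Equiv.prodComm_apply, Prod.fst_swap, Prod.snd_swap]
    rw [show q.swap = (q.2, q.1) from rfl]
    ring
  rw [hinner]
  ring

lemma swap_herm {y : Mat Na Nb} (hH : y.IsHermitian) : (swapM y).IsHermitian := by
  have hAe : ∀ i j, star (y i j) = y j i := by
    intro i j; have := congr_fun (congr_fun hH j) i
    simpa [conjTranspose_apply] using this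
  ext p q
  simp [conjTranspose_apply, swapM, hAe]

lemma ptrans_ptrans (A : Mat Na Nb) : ptrans (ptrans A) = A := by
  ext p q; simp [ptrans]

lemma ptrans_herm {A : Mat Na Nb} (hH : A.IsHermitian) : (ptrans A).IsHermitian := by
  have hAe : ∀ i j, star (A i j) = A j i := by
    intro i j; have := congr_fun (congr_fun hH j) i
    simpa [conjTranspose_apply] using this
  ext p q
  simp [conjTranspose_apply, ptrans, hAe]

lemma ptrans_trace (A : Mat Na Nb) : (ptrans A).trace = A.trace := by
  simp [Matrix.trace, Matrix.diag, ptrans]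

lemma ptrans_smul_real (r : ℝ) (A : Mat Na Nb) : ptrans (r • A) = r • ptrans A := by
  ext p q; simp [ptrans]

lemma ptrans_add (A B : Mat Na Nb) : ptrans (A + B) = ptrans A + ptrans B := by
  ext p q; simp [ptrans]

def flipE (Na Nb : ℕ) :
    ((Fin Na × Fin Nb) × (Fin Na × Fin Nb)) ≃ ((Fin Na × Fin Nb) × (Fin Na × Fin Nb)) where
  toFun x := ((x.1.1, x.2.2), (x.2.1, x.1.2))
  invFun x := ((x.1.1, x.2.2), (x.2.1, x.1.2))
  left_inv := fun ⟨⟨a,b⟩,⟨c,d⟩⟩ => rfl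
  right_inv := fun ⟨⟨a,b⟩,⟨c,d⟩⟩ => rfl

lemma biquad_ptrans (A : Mat Na Nb) (φ : Fin Na → ℂ) (χ : Fin Nb → ℂ) :
    biquad (ptrans A) φ χ = biquad A φ (star χ) := by
  simp only [biquad, pair, dotProduct, mulVec, ptrans, kron, Pi.star_apply, star_mul', star_star]
  simp only [Finset.mul_sum]
  rw [← Finset.sum_product', ← Finset.sum_product', Finset.univ_product_univ]
  refine Fintype.sum_equiv (flipE Na Nb) _ _ fun x => ?_
  simp only [flipE, Equiv.coe_fn_mk]
  ring

lemma ptrans_witness {A : Mat Na Nb} (h : IsWitness A) : IsWitness (ptrans A) :=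
  ⟨ptrans_herm h.1, fun φ χ => by rw [biquad_ptrans]; exact h.2 φ (star χ)⟩

lemma exists_good (a b c d : ℂ) (ha : a ≠ 0) (hd : d ≠ 0) :
    ∃ s : ℂ, a + s * b ≠ 0 ∧ c + s * d ≠ 0 := by
  obtain ⟨s, hs⟩ := Infinite.exists_notMem_finset ({-a/b, -c/d} : Finset ℂ)
  simp only [Finset.mem_insert, Finset.mem_singleton, not_or] at hs
  refine ⟨s, ?_, ?_⟩
  · intro h
    by_cases hb : b = 0
    · rw [hb, mul_zero, add_zero] at h; exact ha h
    · apply hs.1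
      field_simp
      linear_combination h
  · intro h
    apply hs.2
    field_simp
    linear_combination h

lemma pure_mem (ψ : Fin Na × Fin Nb → ℂ) (hψ : EW.enorm ψ = 1) :
    vecMulVec ψ (star ψ) ∈ witnessSet Na Nb := by
  have him : (star ψ ⬝ᵥ ψ).im = 0 := by
    simp only [dotProduct, Pi.star_apply, Complex.im_sum]
    refine Finset.sum_eq_zero fun p _ => ?_
    simp [Complex.star_def, Complex.mul_im]
    ring
  have hre : (star ψ ⬝ᵥ ψ).re = 1 := by
    have := hψ
    unfold EW.enorm at this
    exact Real.sqrt_eq_one.mp this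
  refine ⟨⟨?_, ?_⟩, ?_⟩
  · ext p q
    simp [conjTranspose_apply, vecMulVec_apply, star_mul', star_star, mul_comm]
  · intro φ χ
    rw [biquad, pair_vecMulVec]
    exact star_mul_self_nonneg _
  · have h1 : trace (vecMulVec ψ (star ψ)) = star ψ ⬝ᵥ ψ := by
      simp only [Matrix.trace, Matrix.diag, vecMulVec_apply, dotProduct, Pi.star_apply]
      exact Finset.sum_congr rfl fun p _ => mul_comm _ _
    rw [h1]
    exact Complex.ext (by simpa using hre) (by simpa using him)

lemma pair_matsub {n : Type*} [Fintype n] (A B : Matrix n n ℂ) (x y : n → ℂ) :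
    pair (A - B) x y = pair A x y - pair B x y := by
  simp [pair, sub_mulVec, dotProduct_sub]

lemma pair_matsmul_real (r : ℝ) (A : Mat Na Nb) (x z : Fin Na × Fin Nb → ℂ) :
    pair (r • A) x z = (r:ℂ) * pair A x z := by
  have h : (r:ℝ) • A = ((r:ℂ)) • A := by
    ext p q; simp [Matrix.smul_apply, Complex.real_smul]
  rw [h, pair_matsmul]

lemma dominated (ψ : Fin Na × Fin Nb → ℂ) (hψ : EW.enorm ψ = 1)
    (y : Mat Na Nb) (hyH : y.IsHermitian) (hypos : ∀ φ χ, 0 ≤ biquad y φ χ)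
    (hytr : y.trace = 1) (C : ℂ)
    (hdom : ∀ φ χ, biquad y φ χ ≤ C * (star (star ψ ⬝ᵥ kron φ χ) * (star ψ ⬝ᵥ kron φ χ))) :
    y = vecMulVec ψ (star ψ) := by
  choose k hk using perChi y hyH hypos ψ C hdom
  have hH' : (swapM y).IsHermitian := swap_herm hyH
  have hbq : ∀ φ χ, biquad (swapM y) χ φ = biquad y φ χ := fun φ χ => swap_pair y φ φ χ χ
  have hpos' : ∀ χ φ, 0 ≤ biquad (swapM y) χ φ := fun χ φ => by
    rw [hbq]; exact hypos φ χ
  have hdom' : ∀ χ φ, biquad (swapM y) χ φ ≤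
      C * (star (star (swapV ψ) ⬝ᵥ kron χ φ) * (star (swapV ψ) ⬝ᵥ kron χ φ)) := fun χ φ => by
    rw [hbq, swap_dot]; exact hdom φ χ
  choose m hm using perChi (swapM y) hH' hpos' (swapV ψ) C hdom'
  -- zero squeeze
  have hzero : ∀ φ χ, star ψ ⬝ᵥ kron φ χ = 0 → biquad y φ χ = 0 := by
    intro φ χ h0
    have h1 := hdom φ χ
    rw [h0] at h1
    simp only [star_zero, mul_zero, zero_mul] at h1
    exact le_antisymm h1 (hypos φ χ)
  -- the nonvanishing base point
  have hψ0 : ψ ≠ 0 := by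
    intro h
    rw [h] at hψ
    simp [EW.enorm, dotProduct] at hψ
  obtain ⟨p, hp⟩ := Function.ne_iff.mp hψ0
  set φs : Fin Na → ℂ := Pi.single p.1 1 with hφs
  set χs : Fin Nb → ℂ := Pi.single p.2 1 with hχs
  have hcs : star ψ ⬝ᵥ kron φs χs ≠ 0 := by
    rw [hφs, hχs, kron_single]
    simp only [dotProduct, Pi.star_apply, Pi.single_apply, mul_ite, mul_one, mul_zero,
      Finset.sum_ite_eq', Finset.mem_univ, if_true]
    simpa using hp
  set k0 : ℂ := k χs with hk0
  -- matching
  have hdiag : ∀ φ χ, biquad y φ χ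
      = k χ * star (star ψ ⬝ᵥ kron φ χ) * (star ψ ⬝ᵥ kron φ χ) := fun φ χ => hk χ φ φ
  have hdiagm : ∀ φ χ, biquad y φ χ
      = m φ * star (star ψ ⬝ᵥ kron φ χ) * (star ψ ⬝ᵥ kron φ χ) := by
    intro φ χ
    have := hm φ χ χ
    rw [swap_dot, swap_pair] at this
    exact this
  have hmatch : ∀ φ χ, star ψ ⬝ᵥ kron φ χ ≠ 0 → k χ = m φ := by
    intro φ χ hc
    have h1 := (hdiag φ χ).symm.trans (hdiagm φ χ)
    have hcc : star (star ψ ⬝ᵥ kron φ χ) * (star ψ ⬝ᵥ kron φ χ) ≠ 0 :=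
      mul_ne_zero (star_ne_zero.mpr hc) hc
    rw [mul_assoc, mul_assoc] at h1
    exact mul_right_cancel₀ hcc h1
  -- c is linear in φ
  have hclin : ∀ (φ φ' : Fin Na → ℂ) (t : ℂ) (χ : Fin Nb → ℂ),
      star ψ ⬝ᵥ kron (φ + t • φ') χ
        = star ψ ⬝ᵥ kron φ χ + t * (star ψ ⬝ᵥ kron φ' χ) := by
    intro φ φ' t χ
    rw [kron_add_left, kron_smul_left, dotProduct_add, dotProduct_smul, smul_eq_mul]
  have hlink : ∀ φ χ, star ψ ⬝ᵥ kron φ χ ≠ 0 → k χ = k0 := by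
    intro φ χ hc
    obtain ⟨t, ht1, ht2⟩ := exists_good (star ψ ⬝ᵥ kron φ χ) (star ψ ⬝ᵥ kron φs χ)
      (star ψ ⬝ᵥ kron φ χs) (star ψ ⬝ᵥ kron φs χs) hc hcs
    have hA : star ψ ⬝ᵥ kron (φ + t • φs) χ ≠ 0 := by rw [hclin]; exact ht1
    have hB : star ψ ⬝ᵥ kron (φ + t • φs) χs ≠ 0 := by rw [hclin]; exact ht2
    rw [hmatch _ _ hA, hk0, hmatch _ _ hB]
  -- global formula
  have hglob : ∀ φ χ, biquad y φ χ
      = k0 * (star (star ψ ⬝ᵥ kron φ χ) * (star ψ ⬝ᵥ kron φ χ)) := by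
    intro φ χ
    by_cases hc : star ψ ⬝ᵥ kron φ χ = 0
    · rw [hzero φ χ hc, hc]; ring
    · rw [hdiag φ χ, hlink φ χ hc]; ring
  -- conclude matrix equality
  have hA0 : y - k0 • vecMulVec ψ (star ψ) = 0 := by
    apply biquad_zero_eq_zero
    intro φ χ
    rw [biquad, pair_matsub, pair_matsmul, pair_vecMulVec]
    have := hglob φ χ
    rw [biquad] at this
    rw [this]; ring
  have hy : y = k0 • vecMulVec ψ (star ψ) := by
    have := sub_eq_zero.mp hA0
    exact this
  have htr1 : trace (vecMulVec ψ (star ψ)) = 1 := (pure_mem ψ hψ).2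
  have hk01 : k0 = 1 := by
    have := hytr
    rw [hy, Matrix.trace_smul, htr1] at this
    simpa using this
  rw [hy, hk01, one_smul]

end EWAux


open EW
open EWAux in
theorem pure_state_extremal (Na Nb : ℕ) (ψ : Fin Na × Fin Nb → ℂ) (hψ : EW.enorm ψ = 1) :
    Matrix.vecMulVec ψ (star ψ) ∈ Set.extremePoints ℝ (witnessSet Na Nb) ∧
    ptrans (Matrix.vecMulVec ψ (star ψ)) ∈ Set.extremePoints ℝ (witnessSet Na Nb) := by
  have hmem := pure_mem ψ hψ
  have hdomder : ∀ (a b : ℝ) (yy zz : Mat Na Nb), 0 < a → 0 < b →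
      yy ∈ witnessSet Na Nb → zz ∈ witnessSet Na Nb →
      a • yy + b • zz = vecMulVec ψ (star ψ) →
      ∀ φ χ, biquad yy φ χ ≤ ((a⁻¹:ℝ):ℂ) * (star (star ψ ⬝ᵥ kron φ χ) * (star ψ ⬝ᵥ kron φ χ)) := by
    intro a b yy zz ha hb hyy hzz habe φ χ
    set S : ℂ := star (star ψ ⬝ᵥ kron φ χ) * (star ψ ⬝ᵥ kron φ χ) with hS
    have hsum : ((a:ℝ):ℂ) * biquad yy φ χ + ((b:ℝ):ℂ) * biquad zz φ χ = S := by
      rw [hS, ← pair_vecMulVec, ← habe]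
      simp only [biquad, pair_matadd, pair_matsmul_real]
    have hyle := hyy.1.2 φ χ
    have hzle := hzz.1.2 φ χ
    rw [Complex.le_def] at hyle hzle
    have hyim : (biquad yy φ χ).im = 0 := by simpa using hyle.2.symm
    have hzim : (biquad zz φ χ).im = 0 := by simpa using hzle.2.symm
    have hyre : 0 ≤ (biquad yy φ χ).re := by simpa using hyle.1
    have hzre : 0 ≤ (biquad zz φ χ).re := by simpa using hzle.1
    have hsre := congrArg Complex.re hsum
    have hsim := congrArg Complex.im hsum
    rw [Complex.add_re, Complex.re_ofReal_mul, Complex.re_ofReal_mul] at hsre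
    rw [Complex.add_im, Complex.im_ofReal_mul, Complex.im_ofReal_mul, hyim, hzim] at hsim
    rw [Complex.le_def]
    constructor
    · rw [Complex.re_ofReal_mul]
      have h2 : a * (biquad yy φ χ).re ≤ S.re := by nlinarith [mul_nonneg hb.le hzre]
      have h3 : a * a⁻¹ = 1 := mul_inv_cancel₀ ha.ne'
      have h4 := mul_le_mul_of_nonneg_left h2 (inv_nonneg.mpr ha.le)
      nlinarith [h4, h3]
    · rw [Complex.im_ofReal_mul, hyim, ← hsim]
      ring
  constructor
  · refine ⟨hmem, ?_⟩
    intro yy hyy zz hzz hseg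
    obtain ⟨a, b, ha, hb, hab, habe⟩ := hseg
    have hy := dominated ψ hψ yy hyy.1.1 hyy.1.2 hyy.2 ((a⁻¹:ℝ):ℂ)
      (hdomder a b yy zz ha hb hyy hzz habe)
    have hz : zz = vecMulVec ψ (star ψ) := by
      refine dominated ψ hψ zz hzz.1.1 hzz.1.2 hzz.2 ((b⁻¹:ℝ):ℂ)
        (hdomder b a zz yy hb ha hzz hyy ?_)
      rw [← habe]; abel
    exact hy
  · refine ⟨⟨ptrans_witness hmem.1, by rw [ptrans_trace]; exact hmem.2⟩, ?_⟩
    intro yy hyy zz hzz hseg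
    obtain ⟨a, b, ha, hb, hab, habe⟩ := hseg
    have habe2 : a • ptrans yy + b • ptrans zz = vecMulVec ψ (star ψ) := by
      rw [← ptrans_smul_real, ← ptrans_smul_real, ← ptrans_add, habe, ptrans_ptrans]
    have hyy' : ptrans yy ∈ witnessSet Na Nb :=
      ⟨ptrans_witness hyy.1, by rw [ptrans_trace]; exact hyy.2⟩
    have hzz' : ptrans zz ∈ witnessSet Na Nb :=
      ⟨ptrans_witness hzz.1, by rw [ptrans_trace]; exact hzz.2⟩
    have h1 := dominated ψ hψ (ptrans yy) hyy'.1.1 hyy'.1.2 hyy'.2 ((a⁻¹:ℝ):ℂ)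
      (hdomder a b (ptrans yy) (ptrans zz) ha hb hyy' hzz' habe2)
    have h2 : ptrans zz = vecMulVec ψ (star ψ) := by
      refine dominated ψ hψ (ptrans zz) hzz'.1.1 hzz'.1.2 hzz'.2 ((b⁻¹:ℝ):ℂ)
        (hdomder b a (ptrans zz) (ptrans yy) hb ha hzz' hyy' ?_)
      rw [← habe2]; abel
    rw [← ptrans_ptrans yy, h1]
end
end

section
/- An exposed face of S₁ is the dual of a witness: let Λ be a Hermitian matrix with trace 1 and let F = {ρ ∈ S₁ | Tr(Λρ) = 0}. If F is a face of S₁ (IsExtreme ℝ S₁ F), then Λ is an entanglement witness, i.e. f_Λ(φ,χ) ≥ 0 for all φ, χ (equivalently Tr(Λρ) ≥ 0 for all ρ ∈ S₁). -/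
open Matrix
open scoped ComplexOrder

noncomputable section

open EW

section AuxEW
lemma pair_conj {n : Type*} [Fintype n] {A : Matrix n n ℂ} (hA : A.IsHermitian)
    (x : n → ℂ) : star (pair A x x) = pair A x x := by
  have h1 : ∀ p q, star (A p q) = A q p := fun p q => by
    conv_rhs => rw [← hA.eq]
    rw [Matrix.conjTranspose_apply]
  simp only [pair, dotProduct, Matrix.mulVec, Finset.mul_sum, star_sum, star_mul',
    Pi.star_apply, star_star, h1]
  rw [Finset.sum_comm]
  exact Finset.sum_congr rfl fun p _ => Finset.sum_congr rfl fun q _ => by ring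

lemma pair_self_im {n : Type*} [Fintype n] {A : Matrix n n ℂ} (hA : A.IsHermitian)
    (x : n → ℂ) : (pair A x x).im = 0 :=
  Complex.conj_eq_iff_im.mp (pair_conj hA x)

lemma trace_mul_vecMulVec {n : Type*} [Fintype n] (A : Matrix n n ℂ) (y : n → ℂ) :
    (A * Matrix.vecMulVec y (star y)).trace = pair A y y := by
  simp only [Matrix.trace, Matrix.diag, Matrix.mul_apply, Matrix.vecMulVec_apply,
    pair, dotProduct, Matrix.mulVec, Pi.star_apply, Finset.mul_sum]
  exact Finset.sum_congr rfl fun p _ => Finset.sum_congr rfl fun q _ => by ring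

lemma dot_self_re {n : Type*} [Fintype n] (x : n → ℂ) :
    (star x ⬝ᵥ x).re = ∑ p, Complex.normSq (x p) := by
  simp [dotProduct, Complex.normSq_eq_conj_mul_self]
  rfl

lemma dot_self_pos {n : Type*} [Fintype n] {x : n → ℂ} (hx : x ≠ 0) :
    0 < (star x ⬝ᵥ x).re := by
  rw [dot_self_re]
  obtain ⟨p, hp⟩ := Function.ne_iff.mp hx
  exact Finset.sum_pos' (fun i _ => Complex.normSq_nonneg _)
    ⟨p, Finset.mem_univ p, Complex.normSq_pos.mpr hp⟩

lemma kron_single {Na Nb : ℕ} (p : Fin Na × Fin Nb) :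
    kron (Pi.single p.1 (1:ℂ)) (Pi.single p.2 (1:ℂ)) = Pi.single p 1 := by
  funext q
  simp only [kron, Pi.single_apply]
  by_cases h1 : q.1 = p.1 <;> by_cases h2 : q.2 = p.2 <;>
    simp [h1, h2, Prod.ext_iff]

lemma enorm_single {N : Type*} [Fintype N] [DecidableEq N] (p : N) :
    enorm (Pi.single p (1:ℂ)) = 1 := by
  unfold EW.enorm
  rw [dot_self_re]
  have h1 : (∑ q, Complex.normSq ((Pi.single p (1:ℂ) : N → ℂ) q)) = 1 := by
    rw [Finset.sum_eq_single p] <;> simp +contextual [Pi.single_apply]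
  rw [h1, Real.sqrt_one]

lemma sum_vecMulVec_single {N : Type*} [Fintype N] [DecidableEq N] :
    ∑ p : N, Matrix.vecMulVec (Pi.single p (1:ℂ)) (star (Pi.single p (1:ℂ))) = 1 := by
  ext q r
  simp only [Matrix.sum_apply, Matrix.vecMulVec_apply, Pi.star_apply,
    Pi.single_apply, Matrix.one_apply]
  by_cases h : q = r
  · subst h
    rw [Finset.sum_eq_single q] <;> simp +contextual [eq_comm]
  · rw [if_neg h, Finset.sum_eq_zero]
    intro p _
    by_cases hq : q = p
    · rw [if_neg (fun hr : r = p => h (hq.trans hr.symm))]; simp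
    · rw [if_neg hq]; simp
end AuxEW

theorem exposed_face_dual_to_witness (Na Nb : ℕ) (hNa : 1 ≤ Na) (hNb : 1 ≤ Nb)
    (Λ : Mat Na Nb) (hH : Λ.IsHermitian) (htr : Λ.trace = 1)
    (hface : IsExtreme ℝ (sepSet Na Nb) {ρ ∈ sepSet Na Nb | (Λ * ρ).trace = 0}) :
    ∀ φ χ, 0 ≤ biquad Λ φ χ := by
  intro φ χ
  have him : (biquad Λ φ χ).im = 0 := pair_self_im hH _
  rw [Complex.le_def]
  refine ⟨?_, him.symm⟩
  simp only [Complex.zero_re]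
  by_contra hneg
  push_neg at hneg
  set x := kron φ χ with hxdef
  have hbq : biquad Λ φ χ = pair Λ x x := rfl
  rw [hbq] at hneg
  have hx : x ≠ 0 := by
    intro h0
    rw [h0] at hneg
    simp [pair] at hneg
  set c : ℝ := enorm x with hc
  have hcpos : 0 < c := Real.sqrt_pos.mpr (dot_self_pos hx)
  set y : Fin Na × Fin Nb → ℂ := fun p => (c⁻¹ : ℂ) * x p with hy
  have hky : y = kron (fun i => (c⁻¹ : ℂ) * φ i) χ := by
    funext p; simp [hy, hxdef, kron, mul_assoc]
  have hcc : (starRingEnd ℂ) ((c:ℝ) : ℂ)⁻¹ = ((c:ℝ) : ℂ)⁻¹ := by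
    rw [map_inv₀, Complex.conj_ofReal]
  have hdoty : ∀ (B : Mat Na Nb), pair B y y = ((c⁻¹ : ℂ))^2 * pair B x x := by
    intro B
    simp only [pair, dotProduct, Matrix.mulVec, hy, Pi.star_apply, star_mul',
      Complex.star_def, hcc, Finset.mul_sum]
    refine Finset.sum_congr rfl fun p _ => Finset.sum_congr rfl fun q _ => ?_
    ring
  have hdotyy : star y ⬝ᵥ y = ((c⁻¹:ℂ))^2 * (star x ⬝ᵥ x) := by
    simpa [pair, Matrix.one_mulVec] using hdoty 1
  have hsq : ((c⁻¹:ℂ))^2 = (((c⁻¹)^2 : ℝ) : ℂ) := by push_cast; ring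
  have heny : EW.enorm y = 1 := by
    unfold EW.enorm
    rw [hdotyy, hsq, Complex.re_ofReal_mul,
      Real.sqrt_mul (by positivity), Real.sqrt_sq (by positivity)]
    have : √((star x ⬝ᵥ x).re) = c := rfl
    rw [this]
    field_simp
  -- the negative-trace product state
  set ρneg : Mat Na Nb := Matrix.vecMulVec y (star y) with hρneg
  have hmemneg : ρneg ∈ sepSet Na Nb := by
    apply subset_convexHull
    exact ⟨fun i => (c⁻¹ : ℂ) * φ i, χ, by rw [← hky]; exact heny, by rw [← hky]⟩
  set a : ℝ := -(pair Λ y y).re with ha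
  have hapos : 0 < a := by
    have hre : (pair Λ y y).re = (c⁻¹)^2 * (pair Λ x x).re := by
      rw [hdoty Λ, hsq, Complex.re_ofReal_mul]
    rw [ha, hre]
    have h1 : 0 < (c⁻¹)^2 := by positivity
    nlinarith
  have himneg : (pair Λ y y).im = 0 := pair_self_im hH y
  have hyval : pair Λ y y = ((-a : ℝ) : ℂ) := by
    apply Complex.ext <;> simp [ha, himneg]
  have htrneg : (Λ * ρneg).trace = ((-a : ℝ) : ℂ) := by
    rw [hρneg, trace_mul_vecMulVec, hyval]
  -- the maximally mixed state
  have hNpos : 0 < ((Na * Nb : ℕ) : ℝ) := by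
    have : 0 < Na * Nb := Nat.mul_pos hNa hNb
    exact_mod_cast this
  set b : ℝ := (((Na * Nb : ℕ) : ℝ))⁻¹ with hb
  have hbpos : 0 < b := inv_pos.mpr hNpos
  set ρpos : Mat Na Nb := b • (1 : Mat Na Nb) with hρpos
  have hcardpos : 0 < Fintype.card (Fin Na × Fin Nb) := by
    rw [Fintype.card_prod, Fintype.card_fin, Fintype.card_fin]
    exact Nat.mul_pos hNa hNb
  have hmempos : ρpos ∈ sepSet Na Nb := by
    have hform : ρpos = (Finset.univ : Finset (Fin Na × Fin Nb)).centerMass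
        (fun _ => (1:ℝ))
        (fun p => Matrix.vecMulVec (Pi.single p (1:ℂ)) (star (Pi.single p (1:ℂ)))) := by
      rw [Finset.centerMass, Finset.sum_const, Finset.card_univ]
      simp only [nsmul_eq_mul, mul_one, one_smul]
      rw [sum_vecMulVec_single, hρpos, hb]
      congr 2
      simp [Fintype.card_prod]
    rw [hform]
    unfold sepSet
    refine Finset.centerMass_mem_convexHull _ (fun _ _ => zero_le_one) ?_ ?_
    · rw [Finset.sum_const, Finset.card_univ]
      simp only [nsmul_eq_mul, mul_one]
      exact_mod_cast hcardpos
    · intro p _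
      exact ⟨Pi.single p.1 (1:ℂ), Pi.single p.2 (1:ℂ),
        by rw [kron_single]; exact enorm_single p,
        by rw [kron_single]⟩
  have htrpos : (Λ * ρpos).trace = ((b : ℝ) : ℂ) := by
    rw [hρpos, Matrix.mul_smul, mul_one, Matrix.trace_smul, htr]
    simp [Complex.real_smul]
  -- the convex combination lying in the face
  set t : ℝ := b / (a + b) with htdef
  have habpos : 0 < a + b := by linarith
  have ht0 : 0 < t := div_pos hbpos habpos
  have ht1 : t < 1 := by
    rw [htdef, div_lt_one habpos]; linarith
  set ρ : Mat Na Nb := t • ρneg + (1 - t) • ρpos with hρ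
  have hρsep : ρ ∈ sepSet Na Nb := by
    have hconv : Convex ℝ (sepSet Na Nb) := convex_convexHull ℝ _
    exact hconv hmemneg hmempos (le_of_lt ht0) (by linarith) (by ring)
  have htrρ : (Λ * ρ).trace = 0 := by
    rw [hρ, mul_add, Matrix.mul_smul, Matrix.mul_smul, Matrix.trace_add,
      Matrix.trace_smul, Matrix.trace_smul, htrneg, htrpos]
    have : t • ((-a : ℝ) : ℂ) + (1 - t) • ((b : ℝ) : ℂ)
        = (((t * (-a) + (1 - t) * b : ℝ)) : ℂ) := by
      push_cast [Complex.real_smul]; ring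
    rw [this]
    have hz : t * (-a) + (1 - t) * b = 0 := by
      rw [htdef]
      field_simp
      ring
    rw [hz, Complex.ofReal_zero]
  have hseg : ρ ∈ openSegment ℝ ρneg ρpos :=
    ⟨t, 1 - t, ht0, by linarith, by ring, rfl⟩
  have hmemF := (hface.2 hmemneg hmempos ⟨hρsep, htrρ⟩ hseg)
  have : ((-a : ℝ) : ℂ) = 0 := by rw [← htrneg]; exact hmemF.2
  have : (-a : ℝ) = 0 := by exact_mod_cast this
  linarith
end
end
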